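/- Let k be a field with char k ≠ 2. Let Q be a quadrilateral, and suppose two distinct lines ℓ, ℓ' are both bisectors of Q sharing the same midpoint p. Then the vertices of Q are the vertices of a parallelogram, and p is the centroid of Q. -/

import Mathlib

/-- A line `aX + bY + c = 0` in the plane `k²`. -/
structure Line (k : Type*) [Field k] where
  a : k
  b : k
  c : k
  nd : (a, b) ≠ (0, 0)

namespace Line

variable {k : Type*} [Field k]

/-- The set of points of a line. -/
def pts (L : Line k) : Set (k × k) := {P | L.a * P.1 + L.b * P.2 + L.c = 0}

/-- Two lines are parallel (or equal) if their coefficient vectors are proportional. -/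
def Parallel (L M : Line k) : Prop := L.a * M.b - M.a * L.b = 0

/-- The intersection point of two (non-parallel) lines, by Cramer's rule. -/
noncomputable def inter (L M : Line k) : k × k :=
  ((L.b * M.c - M.b * L.c) / (L.a * M.b - M.a * L.b),
   (M.a * L.c - L.a * M.c) / (L.a * M.b - M.a * L.b))

end Line

/-- A (possibly improper) quadrilateral: four distinct lines, adjacent sides not
parallel, not all four through one point. -/
structure Quadrilateral (k : Type*) [Field k] where
  A : Line k
  B : Line k
  A' : Line k
  B' : Line k
  dAB : A.pts ≠ B.pts
  dAA' : A.pts ≠ A'.pts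
  dAB' : A.pts ≠ B'.pts
  dBA' : B.pts ≠ A'.pts
  dBB' : B.pts ≠ B'.pts
  dA'B' : A'.pts ≠ B'.pts
  adjAB : ¬ A.Parallel B
  adjBA' : ¬ B.Parallel A'
  adjA'B' : ¬ A'.Parallel B'
  adjB'A : ¬ B'.Parallel A
  notConcurrent : ¬ ∃ P : k × k, P ∈ A.pts ∧ P ∈ B.pts ∧ P ∈ A'.pts ∧ P ∈ B'.pts

namespace Quadrilateral

variable {k : Type*} [Field k]

noncomputable def v1 (Q : Quadrilateral k) : k × k := Q.A.inter Q.B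
noncomputable def v2 (Q : Quadrilateral k) : k × k := Q.B.inter Q.A'
noncomputable def v3 (Q : Quadrilateral k) : k × k := Q.A'.inter Q.B'
noncomputable def v4 (Q : Quadrilateral k) : k × k := Q.B'.inter Q.A

/-- The centroid: the mean of the four vertices. -/
noncomputable def centroid (Q : Quadrilateral k) : k × k :=
  ((4 : k)⁻¹) • (Q.v1 + Q.v2 + Q.v3 + Q.v4)

end Quadrilateral

/-- `ℓ` bisects the pair `{L, L'}` with finite midpoint `p`: whenever `ℓ`
crosses the pair (is distinct from both lines and not parallel to both), it
must meet each of them in a finite point and the midpoint of the two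
intersection points is `p`. -/
def BisectsPair {k : Type*} [Field k] (ℓ L L' : Line k) (p : k × k) : Prop :=
  ℓ.pts ≠ L.pts → ℓ.pts ≠ L'.pts → ¬(ℓ.Parallel L ∧ ℓ.Parallel L') →
    ¬ ℓ.Parallel L ∧ ¬ ℓ.Parallel L' ∧
      ((2 : k)⁻¹) • (ℓ.inter L + ℓ.inter L') = p

/-- `ℓ` bisects the quadrilateral `Q` with midpoint `p`: it bisects both pairs
of opposite sides with the same midpoint `p`. -/
def Bisects {k : Type*} [Field k] (Q : Quadrilateral k) (ℓ : Line k) (p : k × k) : Prop :=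
  BisectsPair ℓ Q.A Q.A' p ∧ BisectsPair ℓ Q.B Q.B' p

/-- The multiset `s` of four points consists of the vertices of a parallelogram. -/
def IsParallelogramVertices {k : Type*} [Field k] (s : Multiset (k × k)) : Prop :=
  ∃ w x y z : k × k, s = {w, x, y, z} ∧ w - x = z - y ∧ w ≠ x ∧ w ≠ z ∧ x ≠ z

namespace Line

variable {k : Type*} [Field k]

lemma mem_pts {L : Line k} {x : k × k} : x ∈ L.pts ↔ L.a * x.1 + L.b * x.2 + L.c = 0 :=
  Iff.rfl

lemma nd' (L : Line k) : L.a ≠ 0 ∨ L.b ≠ 0 := by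
  rcases eq_or_ne L.a 0 with h | h
  · rcases eq_or_ne L.b 0 with h' | h'
    · exact absurd (by simp [h, h', Prod.ext_iff]) L.nd
    · exact Or.inr h'
  · exact Or.inl h

lemma par_symm {L M : Line k} (h : L.Parallel M) : M.Parallel L := by
  unfold Parallel at *; linear_combination -h

lemma par_trans {L M N : Line k} (h1 : L.Parallel N) (h2 : M.Parallel N) :
    L.Parallel M := by
  unfold Parallel at *
  rcases eq_or_ne N.b 0 with hb0 | hb0
  · have hNa : N.a ≠ 0 := by
      rcases N.nd' with h | h
      · exact h
      · exact absurd hb0 h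
    rw [hb0] at h1 h2
    have hLb : L.b = 0 := by
      have h1' : N.a * L.b = 0 := by linear_combination -h1
      exact (mul_eq_zero.1 h1').resolve_left hNa
    have hMb : M.b = 0 := by
      have h2' : N.a * M.b = 0 := by linear_combination -h2
      exact (mul_eq_zero.1 h2').resolve_left hNa
    rw [hLb, hMb]; ring
  · have key : (L.a * M.b - M.a * L.b) * N.b = 0 := by
      linear_combination M.b * h1 - L.b * h2
    exact (mul_eq_zero.1 key).resolve_right hb0

lemma det_ne {L M : Line k} (h : ¬ L.Parallel M) : L.a * M.b - M.a * L.b ≠ 0 := h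

lemma inter_mem_left {L M : Line k} (h : ¬ L.Parallel M) : L.inter M ∈ L.pts := by
  have hd := det_ne h
  simp only [mem_pts, inter]
  rw [div_eq_mul_inv, div_eq_mul_inv]
  linear_combination (-L.c) * mul_inv_cancel₀ hd

lemma inter_mem_right {L M : Line k} (h : ¬ L.Parallel M) : L.inter M ∈ M.pts := by
  have hd := det_ne h
  simp only [mem_pts, inter]
  rw [div_eq_mul_inv, div_eq_mul_inv]
  linear_combination (-M.c) * mul_inv_cancel₀ hd

lemma inter_unique {L M : Line k} {x : k × k} (h : ¬ L.Parallel M)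
    (hx : x ∈ L.pts) (hy : x ∈ M.pts) : x = L.inter M := by
  have hd := det_ne h
  rw [mem_pts] at hx hy
  ext
  · show x.1 = _
    rw [inter, eq_div_iff hd]
    linear_combination M.b * hx - L.b * hy
  · show x.2 = _
    rw [inter, eq_div_iff hd]
    linear_combination L.a * hy - M.a * hx

lemma eq_pts_parallel {L M : Line k} (h : L.pts = M.pts) : L.Parallel M := by
  obtain ⟨x, hx⟩ : ∃ x, x ∈ L.pts := by
    rcases L.nd' with ha | hb
    · refine ⟨(-L.c / L.a, 0), ?_⟩
      rw [mem_pts]; field_simp; ring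
    · refine ⟨(0, -L.c / L.b), ?_⟩
      rw [mem_pts]; field_simp; ring
  have hx2 : (x.1 - L.b, x.2 + L.a) ∈ L.pts := by
    rw [mem_pts] at hx ⊢; dsimp only; linear_combination hx
  have hxM : x ∈ M.pts := h ▸ hx
  have hx2M : (x.1 - L.b, x.2 + L.a) ∈ M.pts := h ▸ hx2
  rw [mem_pts] at hxM hx2M
  unfold Parallel
  linear_combination hx2M - hxM

lemma parallel_common_mem {L M : Line k} (h : L.Parallel M) {x z : k × k}
    (hxL : x ∈ L.pts) (hxM : x ∈ M.pts) (hz : z ∈ L.pts) : z ∈ M.pts := by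
  have h' : L.a * M.b - M.a * L.b = 0 := h
  rw [mem_pts] at *
  rcases L.nd' with ha | hb
  · have key : L.a * (M.a * z.1 + M.b * z.2 + M.c) = 0 := by
      linear_combination M.a * hz - M.a * hxL + L.a * hxM + (z.2 - x.2) * h'
    exact (mul_eq_zero.1 key).resolve_left ha
  · have key : L.b * (M.a * z.1 + M.b * z.2 + M.c) = 0 := by
      linear_combination M.b * hz - M.b * hxL + L.b * hxM - (z.1 - x.1) * h'
    exact (mul_eq_zero.1 key).resolve_left hb

lemma parallel_common_point {L M : Line k} (h : L.Parallel M) {x : k × k}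
    (hxL : x ∈ L.pts) (hxM : x ∈ M.pts) : L.pts = M.pts := by
  ext z
  exact ⟨fun hz => parallel_common_mem h hxL hxM hz,
    fun hz => parallel_common_mem (par_symm h) hxM hxL hz⟩

lemma two_point_eq {L M : Line k} {x y : k × k} (hxy : x ≠ y)
    (hxL : x ∈ L.pts) (hyL : y ∈ L.pts) (hxM : x ∈ M.pts) (hyM : y ∈ M.pts) :
    L.pts = M.pts := by
  have hpar : L.Parallel M := by
    rw [mem_pts] at hxL hyL hxM hyM
    show L.a * M.b - M.a * L.b = 0
    have hL : L.a * (y.1 - x.1) + L.b * (y.2 - x.2) = 0 := by linear_combination hyL - hxL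
    have hM : M.a * (y.1 - x.1) + M.b * (y.2 - x.2) = 0 := by linear_combination hyM - hxM
    rcases eq_or_ne (y.1 - x.1) 0 with h1 | h1
    · have h2 : y.2 - x.2 ≠ 0 := by
        intro h2
        exact hxy (Prod.ext_iff.2 ⟨(sub_eq_zero.1 h1).symm, (sub_eq_zero.1 h2).symm⟩)
      have hLb : L.b = 0 := by
        have : L.b * (y.2 - x.2) = 0 := by linear_combination hL - L.a * h1
        exact (mul_eq_zero.1 this).resolve_right h2
      have hMb : M.b = 0 := by
        have : M.b * (y.2 - x.2) = 0 := by linear_combination hM - M.a * h1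
        exact (mul_eq_zero.1 this).resolve_right h2
      rw [hLb, hMb]; ring
    · have key : (L.a * M.b - M.a * L.b) * (y.1 - x.1) = 0 := by
        linear_combination M.b * hL - L.b * hM
      exact (mul_eq_zero.1 key).resolve_right h1
  exact parallel_common_point hpar hxL hxM

/-- The reflection of a line through the point `p`. -/
def reflect (p : k × k) (L : Line k) : Line k :=
  ⟨L.a, L.b, -L.c - 2 * (L.a * p.1 + L.b * p.2), L.nd⟩

lemma reflect_par (p : k × k) (L : Line k) : (reflect p L).Parallel L := by
  show L.a * L.b - L.a * L.b = 0; ring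

lemma smul_two_fst (p : k × k) : (((2:k)) • p).1 = 2 * p.1 := rfl
lemma smul_two_snd (p : k × k) : (((2:k)) • p).2 = 2 * p.2 := rfl

lemma reflect_mem {p x : k × k} {L : Line k} (h : x ∈ L.pts) :
    (2:k) • p - x ∈ (reflect p L).pts := by
  rw [mem_pts] at h ⊢
  have h1 : ((2:k) • p - x).1 = 2 * p.1 - x.1 := rfl
  have h2 : ((2:k) • p - x).2 = 2 * p.2 - x.2 := rfl
  rw [h1, h2]
  show L.a * (2 * p.1 - x.1) + L.b * (2 * p.2 - x.2) +
    (-L.c - 2 * (L.a * p.1 + L.b * p.2)) = 0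
  linear_combination -h

lemma mem_reflect_iff {p x : k × k} {L : Line k} :
    x ∈ (reflect p L).pts ↔ (2:k) • p - x ∈ L.pts := by
  rw [mem_pts, mem_pts]
  have h1 : ((2:k) • p - x).1 = 2 * p.1 - x.1 := rfl
  have h2 : ((2:k) • p - x).2 = 2 * p.2 - x.2 := rfl
  rw [h1, h2]
  show L.a * x.1 + L.b * x.2 + (-L.c - 2 * (L.a * p.1 + L.b * p.2)) = 0 ↔ _
  constructor
  · intro h; linear_combination -h
  · intro h; linear_combination -h

lemma reflect_pts_self {p : k × k} {L : Line k} (hp : p ∈ L.pts) :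
    (reflect p L).pts = L.pts := by
  have hmem : p ∈ (reflect p L).pts := by
    have := reflect_mem (p := p) hp
    have e : (2:k) • p - p = p := by rw [two_smul]; abel
    rwa [e] at this
  exact parallel_common_point (reflect_par p L) hmem hp

lemma midpoint_mem {L : Line k} {x y : k × k} (hchar : (2:k) ≠ 0)
    (hx : x ∈ L.pts) (hy : y ∈ L.pts) : ((2:k)⁻¹) • (x + y) ∈ L.pts := by
  rw [mem_pts] at hx hy ⊢
  have e1 : (((2:k)⁻¹) • (x + y)).1 = (2:k)⁻¹ * (x.1 + y.1) := rfl
  have e2 : (((2:k)⁻¹) • (x + y)).2 = (2:k)⁻¹ * (x.2 + y.2) := rfl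
  rw [e1, e2]
  have h2 : (2:k) * (2:k)⁻¹ = 1 := mul_inv_cancel₀ hchar
  have key : (2:k) * (L.a * ((2:k)⁻¹ * (x.1 + y.1)) + L.b * ((2:k)⁻¹ * (x.2 + y.2)) + L.c) = 0 := by
    linear_combination hx + hy + (L.a * (x.1 + y.1) + L.b * (x.2 + y.2)) * h2
  exact (mul_eq_zero.1 key).resolve_left hchar

end Line

section Aux

open Line

variable {k : Type*} [Field k]

lemma BisectsPair.symm2 {ℓ L L' : Line k} {p : k × k} (h : BisectsPair ℓ L L' p) :
    BisectsPair ℓ L' L p := by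
  intro h1 h2 h3
  obtain ⟨a, b, c⟩ := h h2 h1 (fun hc => h3 ⟨hc.2, hc.1⟩)
  exact ⟨b, a, by rw [← c, add_comm]⟩

lemma double_eq {p : k × k} {s : k × k} (hchar : (2:k) ≠ 0)
    (h : ((2:k)⁻¹) • s = p) : s = (2:k) • p := by
  rw [← h, smul_smul, mul_inv_cancel₀ hchar, one_smul]

lemma half_eq {p x : k × k} (hchar : (2:k) ≠ 0) (h : x + x = (2:k) • p) : x = p := by
  have h2 : (2:k) • x = (2:k) • p := by rw [two_smul]; exact h
  exact smul_right_injective (k × k) hchar h2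

lemma cross_mem {m L L' : Line k} {p : k × k} (hchar : (2:k) ≠ 0)
    (h : BisectsPair m L L' p) (h1 : m.pts ≠ L.pts) (h2 : m.pts ≠ L'.pts)
    (h3 : ¬ m.Parallel L) : p ∈ m.pts := by
  obtain ⟨hnp, hnp', hmid⟩ := h h1 h2 (fun hc => h3 hc.1)
  have := midpoint_mem hchar (inter_mem_left hnp) (inter_mem_left hnp')
  rwa [hmid] at this

/-- A line parallel to `A` that bisects pair `{B, B'}` passes through `p`. -/
lemma par_line_cross {m A B B' : Line k} {p : k × k} (hchar : (2:k) ≠ 0)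
    (hmA : m.Parallel A) (hbB : BisectsPair m B B' p)
    (dAB : A.pts ≠ B.pts) (dAB' : A.pts ≠ B'.pts)
    (hAB : ¬ A.Parallel B) (hAB' : ¬ A.Parallel B') : p ∈ m.pts := by
  have hmB : m.pts ≠ B.pts := by
    intro h
    exact hAB (par_trans (par_symm hmA) (par_symm (eq_pts_parallel h)))
  have hmB' : m.pts ≠ B'.pts := by
    intro h
    exact hAB' (par_trans (par_symm hmA) (par_symm (eq_pts_parallel h)))
  exact cross_mem hchar hbB hmB hmB'
    (fun u => hAB (par_trans (par_symm hmA) (par_symm u)))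

lemma caseA_of_eq {A B A' B' ℓ ℓ' : Line k} {p : k × k} (hchar : (2:k) ≠ 0)
    (hne : ℓ.pts ≠ ℓ'.pts)
    (hbA' : BisectsPair ℓ' A A' p) (hbB : BisectsPair ℓ B B' p)
    (hbB' : BisectsPair ℓ' B B' p)
    (hnAA' : ¬ A.Parallel A') (hℓA : ℓ.pts = A.pts)
    (dAB : A.pts ≠ B.pts) (dAB' : A.pts ≠ B'.pts)
    (dA'B : A'.pts ≠ B.pts) (dA'B' : A'.pts ≠ B'.pts)
    (hAB : ¬ A.Parallel B) (hAB' : ¬ A.Parallel B')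
    (hA'B : ¬ A'.Parallel B) (hA'B' : ¬ A'.Parallel B') :
    p ∈ A.pts ∧ p ∈ A'.pts := by
  have hpA : p ∈ A.pts := by
    have := par_line_cross hchar (eq_pts_parallel hℓA) hbB dAB dAB' hAB hAB'
    rwa [hℓA] at this
  refine ⟨hpA, ?_⟩
  by_cases c1 : ℓ'.pts = A.pts
  · exact absurd (hℓA.trans c1.symm) hne
  by_cases c2 : ℓ'.pts = A'.pts
  · have := par_line_cross hchar (eq_pts_parallel c2) hbB' dA'B dA'B' hA'B hA'B'
    rwa [c2] at this
  have c3 : ¬(ℓ'.Parallel A ∧ ℓ'.Parallel A') :=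
    fun hc => hnAA' (par_trans (par_symm hc.1) (par_symm hc.2))
  obtain ⟨hn, hn', hmid⟩ := hbA' c1 c2 c3
  have hsum : ℓ'.inter A + ℓ'.inter A' = (2:k) • p := double_eq hchar hmid
  have hq' : ℓ'.inter A' = (2:k) • p - ℓ'.inter A := by rw [← hsum]; abel
  have hmemA : ℓ'.inter A' ∈ A.pts := by
    have h0 : (2:k) • p - ℓ'.inter A ∈ (Line.reflect p A).pts :=
      reflect_mem (inter_mem_right hn)
    rw [reflect_pts_self hpA] at h0
    rw [hq']; exact h0
  have heq : ℓ'.inter A' = ℓ'.inter A :=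
    inter_unique hn (inter_mem_left hn') hmemA
  have hsum2 : ℓ'.inter A + ℓ'.inter A = (2:k) • p := by
    rw [← heq] at hsum
    rw [← heq]; rw [heq] at hsum ⊢; exact hsum
  have hp : ℓ'.inter A = p := half_eq hchar hsum2
  have hp' : ℓ'.inter A' = p := heq.trans hp
  exact hp' ▸ (inter_mem_right hn' : ℓ'.inter A' ∈ A'.pts)

lemma caseA {A B A' B' ℓ ℓ' : Line k} {p : k × k} (hchar : (2:k) ≠ 0)
    (hne : ℓ.pts ≠ ℓ'.pts)
    (hbA : BisectsPair ℓ A A' p) (hbB : BisectsPair ℓ B B' p)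
    (hbA' : BisectsPair ℓ' A A' p) (hbB' : BisectsPair ℓ' B B' p)
    (hnAA' : ¬ A.Parallel A')
    (dAB : A.pts ≠ B.pts) (dAB' : A.pts ≠ B'.pts)
    (dA'B : A'.pts ≠ B.pts) (dA'B' : A'.pts ≠ B'.pts)
    (hAB : ¬ A.Parallel B) (hAB' : ¬ A.Parallel B')
    (hA'B : ¬ A'.Parallel B) (hA'B' : ¬ A'.Parallel B') :
    p ∈ A.pts ∧ p ∈ A'.pts := by
  have hnA'A : ¬ A'.Parallel A := fun h => hnAA' (par_symm h)
  by_cases e1 : ℓ.pts = A.pts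
  · exact caseA_of_eq hchar hne hbA' hbB hbB' hnAA' e1 dAB dAB' dA'B dA'B' hAB hAB' hA'B hA'B'
  by_cases e2 : ℓ.pts = A'.pts
  · have := caseA_of_eq hchar hne hbA'.symm2 hbB hbB' hnA'A e2 dA'B dA'B' dAB dAB' hA'B hA'B' hAB hAB'
    exact ⟨this.2, this.1⟩
  by_cases e1' : ℓ'.pts = A.pts
  · exact caseA_of_eq hchar (Ne.symm hne) hbA hbB' hbB hnAA' e1' dAB dAB' dA'B dA'B' hAB hAB' hA'B hA'B'
  by_cases e2' : ℓ'.pts = A'.pts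
  · have := caseA_of_eq hchar (Ne.symm hne) hbA.symm2 hbB' hbB hnA'A e2' dA'B dA'B' dAB dAB' hA'B hA'B' hAB hAB'
    exact ⟨this.2, this.1⟩
  have c3 : ¬(ℓ.Parallel A ∧ ℓ.Parallel A') :=
    fun hc => hnAA' (par_trans (par_symm hc.1) (par_symm hc.2))
  have c3' : ¬(ℓ'.Parallel A ∧ ℓ'.Parallel A') :=
    fun hc => hnAA' (par_trans (par_symm hc.1) (par_symm hc.2))
  obtain ⟨hn1, hn1', hm⟩ := hbA e1 e2 c3
  obtain ⟨hn2, hn2', hm'⟩ := hbA' e1' e2' c3'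
  have hsum : ℓ.inter A + ℓ.inter A' = (2:k) • p := double_eq hchar hm
  have hsum' : ℓ'.inter A + ℓ'.inter A' = (2:k) • p := double_eq hchar hm'
  have hrq' : ℓ.inter A' ∈ (Line.reflect p A).pts := by
    have e : ℓ.inter A' = (2:k) • p - ℓ.inter A := by rw [← hsum]; abel
    rw [e]; exact reflect_mem (inter_mem_right hn1)
  have hrr' : ℓ'.inter A' ∈ (Line.reflect p A).pts := by
    have e : ℓ'.inter A' = (2:k) • p - ℓ'.inter A := by rw [← hsum']; abel
    rw [e]; exact reflect_mem (inter_mem_right hn2)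
  have hσA' : ¬ (Line.reflect p A).Parallel A' := by
    intro h
    exact hnAA' (par_trans (par_symm (reflect_par p A)) (par_symm h))
  by_cases hqq : ℓ.inter A' = ℓ'.inter A'
  · have hqr : ℓ.inter A = ℓ'.inter A := by
      have e1'' : ℓ.inter A = (2:k) • p - ℓ.inter A' := by rw [← hsum]; abel
      have e2'' : ℓ'.inter A = (2:k) • p - ℓ'.inter A' := by rw [← hsum']; abel
      rw [e1'', e2'', hqq]
    by_cases hqq' : ℓ.inter A = ℓ.inter A'
    · have hsum2 : ℓ.inter A + ℓ.inter A = (2:k) • p := by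
        rw [← hqq'] at hsum; exact hsum
      have hp : ℓ.inter A = p := half_eq hchar hsum2
      refine ⟨hp ▸ inter_mem_right hn1, ?_⟩
      have : ℓ.inter A' ∈ A'.pts := inter_mem_right hn1'
      rw [← hqq', hp] at this
      exact this
    · have hq1 : ℓ.inter A ∈ ℓ.pts := inter_mem_left hn1
      have hq2 : ℓ.inter A' ∈ ℓ.pts := inter_mem_left hn1'
      have hq3 : ℓ.inter A ∈ ℓ'.pts := hqr ▸ inter_mem_left hn2
      have hq4 : ℓ.inter A' ∈ ℓ'.pts := hqq ▸ inter_mem_left hn2'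
      exact absurd (two_point_eq hqq' hq1 hq2 hq3 hq4) hne
  · have h1 := inter_unique hσA' hrq' (inter_mem_right hn1')
    have h2 := inter_unique hσA' hrr' (inter_mem_right hn2')
    exact absurd (h1.trans h2.symm) hqq

/-- Master lemma for one pair of opposite sides. -/
lemma mainA {A B A' B' ℓ ℓ' : Line k} {p : k × k} (hchar : (2:k) ≠ 0)
    (hne : ℓ.pts ≠ ℓ'.pts)
    (hbA : BisectsPair ℓ A A' p) (hbB : BisectsPair ℓ B B' p)
    (hbA' : BisectsPair ℓ' A A' p) (hbB' : BisectsPair ℓ' B B' p)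
    (dAB : A.pts ≠ B.pts) (dAB' : A.pts ≠ B'.pts)
    (dA'B : A'.pts ≠ B.pts) (dA'B' : A'.pts ≠ B'.pts)
    (hAB : ¬ A.Parallel B) (hAB' : ¬ A.Parallel B')
    (hA'B : ¬ A'.Parallel B) (hA'B' : ¬ A'.Parallel B') :
    (Line.reflect p A).pts = A'.pts ∨ (p ∈ A.pts ∧ p ∈ A'.pts) := by
  by_cases hpar : A.Parallel A'
  · left
    have H : ∀ m : Line k, BisectsPair m A A' p → BisectsPair m B B' p →
        (Line.reflect p A).pts = A'.pts ∨ (p ∈ m.pts ∧ m.Parallel A) := by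
      intro m hbmA hbmB
      by_cases e1 : m.pts = A.pts
      · exact Or.inr ⟨par_line_cross hchar (eq_pts_parallel e1) hbmB dAB dAB' hAB hAB',
          eq_pts_parallel e1⟩
      by_cases e2 : m.pts = A'.pts
      · exact Or.inr ⟨par_line_cross hchar (eq_pts_parallel e2) hbmB dA'B dA'B' hA'B hA'B',
          par_trans (eq_pts_parallel e2) hpar⟩
      by_cases e3 : m.Parallel A ∧ m.Parallel A'
      · exact Or.inr ⟨par_line_cross hchar e3.1 hbmB dAB dAB' hAB hAB', e3.1⟩
      left
      obtain ⟨hn, hn', hmid⟩ := hbmA e1 e2 e3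
      have hsum : m.inter A + m.inter A' = (2:k) • p := double_eq hchar hmid
      have hx : m.inter A' ∈ (Line.reflect p A).pts := by
        have e : m.inter A' = (2:k) • p - m.inter A := by rw [← hsum]; abel
        rw [e]; exact reflect_mem (inter_mem_right hn)
      have hpar2 : (Line.reflect p A).Parallel A' :=
        par_trans (reflect_par p A) (par_symm hpar)
      exact parallel_common_point hpar2 hx (inter_mem_right hn')
    rcases H ℓ hbA hbB with h | ⟨hpℓ, hℓA⟩
    · exact h
    rcases H ℓ' hbA' hbB' with h | ⟨hpℓ', hℓ'A⟩
    · exact h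
    exact absurd (parallel_common_point (par_trans hℓA hℓ'A) hpℓ hpℓ') hne
  · exact Or.inr (caseA hchar hne hbA hbB hbA' hbB' hpar dAB dAB' dA'B dA'B'
      hAB hAB' hA'B hA'B')

end Aux

section Final

open Line

variable {k : Type*} [Field k]

lemma v1_memA (Q : Quadrilateral k) : Q.v1 ∈ Q.A.pts := inter_mem_left Q.adjAB
lemma v1_memB (Q : Quadrilateral k) : Q.v1 ∈ Q.B.pts := inter_mem_right Q.adjAB
lemma v2_memB (Q : Quadrilateral k) : Q.v2 ∈ Q.B.pts := inter_mem_left Q.adjBA'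
lemma v2_memA' (Q : Quadrilateral k) : Q.v2 ∈ Q.A'.pts := inter_mem_right Q.adjBA'
lemma v3_memA' (Q : Quadrilateral k) : Q.v3 ∈ Q.A'.pts := inter_mem_left Q.adjA'B'
lemma v3_memB' (Q : Quadrilateral k) : Q.v3 ∈ Q.B'.pts := inter_mem_right Q.adjA'B'
lemma v4_memB' (Q : Quadrilateral k) : Q.v4 ∈ Q.B'.pts := inter_mem_left Q.adjB'A
lemma v4_memA (Q : Quadrilateral k) : Q.v4 ∈ Q.A.pts := inter_mem_right Q.adjB'A

lemma L1 (Q : Quadrilateral k) (h12 : Q.v1 = Q.v2) (h34 : Q.v3 = Q.v4) : False := by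
  have hv1A' : Q.v1 ∈ Q.A'.pts := by rw [h12]; exact v2_memA' Q
  have hv3A : Q.v3 ∈ Q.A.pts := by rw [h34]; exact v4_memA Q
  by_cases h13 : Q.v1 = Q.v3
  · exact Q.notConcurrent ⟨Q.v1, v1_memA Q, v1_memB Q, hv1A',
      by rw [h13]; exact v3_memB' Q⟩
  · exact Q.dAA' (two_point_eq h13 (v1_memA Q) hv3A hv1A' (v3_memA' Q))

lemma L2 (Q : Quadrilateral k) (h14 : Q.v1 = Q.v4) (h23 : Q.v2 = Q.v3) : False := by
  have hv1B' : Q.v1 ∈ Q.B'.pts := by rw [h14]; exact v4_memB' Q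
  have hv2B' : Q.v2 ∈ Q.B'.pts := by rw [h23]; exact v3_memB' Q
  by_cases h12 : Q.v1 = Q.v2
  · exact Q.notConcurrent ⟨Q.v1, v1_memA Q, v1_memB Q,
      by rw [h12]; exact v2_memA' Q, hv1B'⟩
  · exact Q.dBB' (two_point_eq h12 (v1_memB Q) (v2_memB Q) hv1B' hv2B')

lemma L3 (Q : Quadrilateral k) : Q.v1 ≠ Q.v3 := by
  intro h
  exact Q.notConcurrent ⟨Q.v1, v1_memA Q, v1_memB Q,
    by rw [h]; exact v3_memA' Q, by rw [h]; exact v3_memB' Q⟩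

lemma L4 (Q : Quadrilateral k) : Q.v2 ≠ Q.v4 := by
  intro h
  exact Q.notConcurrent ⟨Q.v2, by rw [h]; exact v4_memA Q, v2_memB Q,
    v2_memA' Q, by rw [h]; exact v4_memB' Q⟩

lemma centroid_eq (hchar : (2:k) ≠ 0) (Q : Quadrilateral k) {p : k × k}
    (h : Q.v1 + Q.v2 + Q.v3 + Q.v4 = (4:k) • p) : p = Q.centroid := by
  have h4 : (4:k) ≠ 0 := by
    have e : (4:k) = 2 * 2 := by norm_num
    rw [e]; exact mul_ne_zero hchar hchar
  unfold Quadrilateral.centroid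
  rw [h, smul_smul, inv_mul_cancel₀ h4, one_smul]

lemma total_sum {p x y z w : k × k} (h1 : x + y = (2:k) • p) (h2 : z + w = (2:k) • p) :
    x + z + y + w = (4:k) • p := by
  have e : (2:k) • p + (2:k) • p = (4:k) • p := by rw [← add_smul]; norm_num
  calc x + z + y + w = (x + y) + (z + w) := by abel
    _ = (2:k) • p + (2:k) • p := by rw [h1, h2]
    _ = (4:k) • p := e

lemma finishA (hchar : (2:k) ≠ 0) (Q : Quadrilateral k) {p : k × k}
    (s13 : Q.v1 + Q.v3 = (2:k) • p) (s24 : Q.v2 + Q.v4 = (2:k) • p) :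
    IsParallelogramVertices ({Q.v1, Q.v2, Q.v3, Q.v4} : Multiset (k × k)) ∧
      p = Q.centroid := by
  have hadd : Q.v1 + Q.v3 = Q.v2 + Q.v4 := s13.trans s24.symm
  constructor
  · refine ⟨Q.v1, Q.v2, Q.v3, Q.v4, rfl, ?_, ?_, ?_, L4 Q⟩
    · rw [sub_eq_sub_iff_add_eq_add, hadd, add_comm]
    · intro h
      have h' := hadd
      rw [h] at h'
      exact L1 Q h (add_left_cancel h')
    · intro h
      have h' := hadd
      rw [h] at h'
      have h23 : Q.v2 = Q.v3 := by
        apply add_right_cancel (b := Q.v4)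
        rw [← h']; exact add_comm _ _
      exact L2 Q h h23
  · exact centroid_eq hchar Q (total_sum s13 s24)

lemma finishB (hchar : (2:k) ≠ 0) (Q : Quadrilateral k) {p : k × k}
    (s14 : Q.v1 + Q.v4 = (2:k) • p) (s23 : Q.v2 + Q.v3 = (2:k) • p)
    (hpA : p ∈ Q.A.pts) (hpA' : p ∈ Q.A'.pts) :
    IsParallelogramVertices ({Q.v1, Q.v2, Q.v3, Q.v4} : Multiset (k × k)) ∧
      p = Q.centroid := by
  have hadd : Q.v1 + Q.v4 = Q.v2 + Q.v3 := s14.trans s23.symm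
  constructor
  · refine ⟨Q.v1, Q.v2, Q.v4, Q.v3, ?_, ?_, ?_, L3 Q, ?_⟩
    · show ({Q.v1, Q.v2, Q.v3, Q.v4} : Multiset (k × k)) = {Q.v1, Q.v2, Q.v4, Q.v3}
      simp only [Multiset.insert_eq_cons]
      exact congrArg _ (congrArg _ (Multiset.cons_swap _ _ _))
    · rw [sub_eq_sub_iff_add_eq_add, hadd, add_comm]
    · intro h
      have h' := hadd
      rw [h] at h'
      exact L1 Q h (add_left_cancel h').symm
    · intro h
      have hv2p : Q.v2 = p := by
        apply half_eq hchar
        rw [← h] at s23; exact s23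
      exact Q.notConcurrent ⟨p, hpA, by rw [← hv2p]; exact v2_memB Q, hpA',
        by rw [← hv2p, h]; exact v3_memB' Q⟩
  · exact centroid_eq hchar Q (by
      calc Q.v1 + Q.v2 + Q.v3 + Q.v4 = Q.v1 + Q.v2 + Q.v4 + Q.v3 := by abel
        _ = (4:k) • p := total_sum (x := Q.v1) (y := Q.v4) (z := Q.v2) (w := Q.v3) s14 s23)

lemma finishC (hchar : (2:k) ≠ 0) (Q : Quadrilateral k) {p : k × k}
    (s12 : Q.v1 + Q.v2 = (2:k) • p) (s34 : Q.v3 + Q.v4 = (2:k) • p)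
    (hpB : p ∈ Q.B.pts) (hpB' : p ∈ Q.B'.pts) :
    IsParallelogramVertices ({Q.v1, Q.v2, Q.v3, Q.v4} : Multiset (k × k)) ∧
      p = Q.centroid := by
  have hadd : Q.v1 + Q.v2 = Q.v3 + Q.v4 := s12.trans s34.symm
  constructor
  · refine ⟨Q.v1, Q.v3, Q.v2, Q.v4, ?_, ?_, L3 Q, ?_, ?_⟩
    · show ({Q.v1, Q.v2, Q.v3, Q.v4} : Multiset (k × k)) = {Q.v1, Q.v3, Q.v2, Q.v4}
      simp only [Multiset.insert_eq_cons]
      exact congrArg _ (Multiset.cons_swap _ _ _)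
    · rw [sub_eq_sub_iff_add_eq_add, hadd, add_comm]
    · intro h
      have h' := hadd
      rw [h] at h'
      have h23 : Q.v2 = Q.v3 := by
        apply add_right_cancel (b := Q.v4)
        rw [← h']; exact add_comm _ _
      exact L2 Q h h23
    · intro h
      have hv3p : Q.v3 = p := by
        apply half_eq hchar
        rw [← h] at s34; exact s34
      exact Q.notConcurrent ⟨p, by rw [← hv3p, h]; exact v4_memA Q, hpB,
        by rw [← hv3p]; exact v3_memA' Q, hpB'⟩
  · exact centroid_eq hchar Q (by
      calc Q.v1 + Q.v2 + Q.v3 + Q.v4 = Q.v1 + Q.v3 + Q.v2 + Q.v4 := by abel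
        _ = (4:k) • p := total_sum s12 s34)

end Final

/-- Proposition 3.5: if two distinct lines both bisect a quadrilateral `Q`
with the same midpoint `p`, then the vertices of `Q` are the vertices of a
parallelogram, and `p` is the centroid of `Q`. -/
theorem shared_midpoint_parallelogram {k : Type*} [Field k] (hchar : (2 : k) ≠ 0)
    (Q : Quadrilateral k) (ℓ ℓ' : Line k) (p : k × k)
    (hne : ℓ.pts ≠ ℓ'.pts)
    (hb : Bisects Q ℓ p) (hb' : Bisects Q ℓ' p) :
    IsParallelogramVertices ({Q.v1, Q.v2, Q.v3, Q.v4} : Multiset (k × k)) ∧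
      p = Q.centroid := by
  obtain ⟨hbA, hbB⟩ := hb
  obtain ⟨hbA', hbB'⟩ := hb'
  have hAB' : ¬ Q.A.Parallel Q.B' := fun h => Q.adjB'A (Line.par_symm h)
  have hA'B : ¬ Q.A'.Parallel Q.B := fun h => Q.adjBA' (Line.par_symm h)
  have hBA : ¬ Q.B.Parallel Q.A := fun h => Q.adjAB (Line.par_symm h)
  have hB'A' : ¬ Q.B'.Parallel Q.A' := fun h => Q.adjA'B' (Line.par_symm h)
  have HA := mainA hchar hne hbA hbB hbA' hbB' Q.dAB Q.dAB' (Ne.symm Q.dBA')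
    Q.dA'B' Q.adjAB hAB' hA'B Q.adjA'B'
  have HB := mainA (A := Q.B) (B := Q.A') (A' := Q.B') (B' := Q.A) hchar hne
    hbB hbA.symm2 hbB' hbA'.symm2 Q.dBA' (Ne.symm Q.dAB) (Ne.symm Q.dA'B')
    (Ne.symm Q.dAB') Q.adjBA' hBA hB'A' Q.adjB'A
  rcases HA with hA | hA2 <;> rcases HB with hB | hB2
  · -- σA = A', σB = B'
    have m1 : (2:k) • p - Q.v1 ∈ Q.A'.pts := by
      rw [← hA]; exact Line.reflect_mem (v1_memA Q)
    have m2 : (2:k) • p - Q.v1 ∈ Q.B'.pts := by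
      rw [← hB]; exact Line.reflect_mem (v1_memB Q)
    have e3 : (2:k) • p - Q.v1 = Q.v3 :=
      Line.inter_unique Q.adjA'B' m1 m2
    have s13 : Q.v1 + Q.v3 = (2:k) • p := by rw [← e3]; abel
    have m3 : (2:k) • p - Q.v2 ∈ Q.A.pts := by
      have hmem : Q.v2 ∈ (Line.reflect p Q.A).pts := by rw [hA]; exact v2_memA' Q
      exact Line.mem_reflect_iff.1 hmem
    have m4 : (2:k) • p - Q.v2 ∈ Q.B'.pts := by
      rw [← hB]; exact Line.reflect_mem (v2_memB Q)
    have e4 : (2:k) • p - Q.v2 = Q.v4 :=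
      Line.inter_unique Q.adjB'A m4 m3
    have s24 : Q.v2 + Q.v4 = (2:k) • p := by rw [← e4]; abel
    exact finishA hchar Q s13 s24
  · -- σA = A', p ∈ B ∩ B'
    have m1 : (2:k) • p - Q.v1 ∈ Q.A'.pts := by
      rw [← hA]; exact Line.reflect_mem (v1_memA Q)
    have m2 : (2:k) • p - Q.v1 ∈ Q.B.pts := by
      rw [← Line.reflect_pts_self hB2.1]; exact Line.reflect_mem (v1_memB Q)
    have e2 : (2:k) • p - Q.v1 = Q.v2 :=
      Line.inter_unique Q.adjBA' m2 m1
    have s12 : Q.v1 + Q.v2 = (2:k) • p := by rw [← e2]; abel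
    have m3 : (2:k) • p - Q.v3 ∈ Q.A.pts := by
      have hmem : Q.v3 ∈ (Line.reflect p Q.A).pts := by rw [hA]; exact v3_memA' Q
      exact Line.mem_reflect_iff.1 hmem
    have m4 : (2:k) • p - Q.v3 ∈ Q.B'.pts := by
      rw [← Line.reflect_pts_self hB2.2]; exact Line.reflect_mem (v3_memB' Q)
    have e4 : (2:k) • p - Q.v3 = Q.v4 :=
      Line.inter_unique Q.adjB'A m4 m3
    have s34 : Q.v3 + Q.v4 = (2:k) • p := by rw [← e4]; abel
    exact finishC hchar Q s12 s34 hB2.1 hB2.2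
  · -- p ∈ A ∩ A', σB = B'
    have m1 : (2:k) • p - Q.v1 ∈ Q.A.pts := by
      rw [← Line.reflect_pts_self hA2.1]; exact Line.reflect_mem (v1_memA Q)
    have m2 : (2:k) • p - Q.v1 ∈ Q.B'.pts := by
      rw [← hB]; exact Line.reflect_mem (v1_memB Q)
    have e4 : (2:k) • p - Q.v1 = Q.v4 :=
      Line.inter_unique Q.adjB'A m2 m1
    have s14 : Q.v1 + Q.v4 = (2:k) • p := by rw [← e4]; abel
    have m3 : (2:k) • p - Q.v2 ∈ Q.A'.pts := by
      rw [← Line.reflect_pts_self hA2.2]; exact Line.reflect_mem (v2_memA' Q)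
    have m4 : (2:k) • p - Q.v2 ∈ Q.B'.pts := by
      rw [← hB]; exact Line.reflect_mem (v2_memB Q)
    have e3 : (2:k) • p - Q.v2 = Q.v3 :=
      Line.inter_unique Q.adjA'B' m3 m4
    have s23 : Q.v2 + Q.v3 = (2:k) • p := by rw [← e3]; abel
    exact finishB hchar Q s14 s23 hA2.1 hA2.2
  · exact absurd ⟨p, hA2.1, hB2.1, hA2.2, hB2.2⟩ Q.notConcurrent
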